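/- Let n ≥ 2 and p > 1. If Φ : P^n → C_p(R^n) is SL(n)-covariant, then Φ(P)(x) = Φ(P)(π_P x) for all P ∈ P^n and all x ∈ R^n, where π_P denotes the orthogonal projection of R^n onto the linear hull of P. -/

import Mathlib

open MeasureTheory Metric
open scoped RealInnerProductSpace Pointwise

noncomputable section

/-- Euclidean `n`-space. -/
abbrev Eucl (n : ℕ) : Type := EuclideanSpace ℝ (Fin n)

/-- A convex body: a nonempty compact convex subset of `ℝⁿ`. -/
def IsConvexBody {n : ℕ} (K : Set (Eucl n)) : Prop :=
  K.Nonempty ∧ IsCompact K ∧ Convex ℝ K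

/-- A convex body containing the origin. -/
def IsConvexBodyO {n : ℕ} (K : Set (Eucl n)) : Prop :=
  IsConvexBody K ∧ (0 : Eucl n) ∈ K

/-- A convex polytope: the convex hull of a finite nonempty set of points. -/
def IsPolytope {n : ℕ} (P : Set (Eucl n)) : Prop :=
  ∃ S : Finset (Eucl n), S.Nonempty ∧ P = convexHull ℝ (S : Set (Eucl n))

/-- A convex polytope containing the origin. -/
def IsPolytopeO {n : ℕ} (P : Set (Eucl n)) : Prop :=
  IsPolytope P ∧ (0 : Eucl n) ∈ P

/-- The support function `h(K, u) = sup_{x ∈ K} ⟨x, u⟩`. -/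
def suppFn {n : ℕ} (K : Set (Eucl n)) (u : Eucl n) : ℝ :=
  sSup ((fun x => ⟪x, u⟫) '' K)

/-- The dimension of a convex set: the dimension of its affine hull. -/
def setDim {n : ℕ} (P : Set (Eucl n)) : ℕ :=
  Module.finrank ℝ (affineSpan ℝ P).direction

/-- `h(I_p⁺ K, u)^p = max_{x ∈ K} ⟨x, u⟩₊^p`. -/
def IppF {n : ℕ} (p : ℝ) (K : Set (Eucl n)) (u : Eucl n) : ℝ :=
  sSup ((fun x => (max ⟪x, u⟫ 0) ^ p) '' K)

/-- `h(I_p⁻ K, u)^p = max_{x ∈ K} ⟨x, u⟩₋^p`. -/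
def ImpF {n : ℕ} (p : ℝ) (K : Set (Eucl n)) (u : Eucl n) : ℝ :=
  sSup ((fun x => (max (-⟪x, u⟫) 0) ^ p) '' K)

/-- `(J_p⁺ K)(u) = min_{x ∈ K} ⟨x, u⟩₊^p`. -/
def JppF {n : ℕ} (p : ℝ) (K : Set (Eucl n)) (u : Eucl n) : ℝ :=
  sInf ((fun x => (max ⟪x, u⟫ 0) ^ p) '' K)

/-- `(J_p⁻ K)(u) = min_{x ∈ K} ⟨x, u⟩₋^p`. -/
def JmpF {n : ℕ} (p : ℝ) (K : Set (Eucl n)) (u : Eucl n) : ℝ :=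
  sInf ((fun x => (max (-⟪x, u⟫) 0) ^ p) '' K)

/-- The face `F(K, v) = {x ∈ K : ⟨x, v⟩ = h(K, v)}`. -/
def face {n : ℕ} (K : Set (Eucl n)) (v : Eucl n) : Set (Eucl n) :=
  {x ∈ K | ⟪x, v⟫ = suppFn K v}

/-- `h(E_p⁺ K, u)^p = (1/2) Σ_{v ∈ S¹, h(K,v) = 0} max_{x ∈ F(K,v)} ⟨x, u⟩₊^p`. -/
def EppF {n : ℕ} (p : ℝ) (K : Set (Eucl n)) (u : Eucl n) : ℝ :=
  (1 / 2) * ∑' v : {v : Eucl n // ‖v‖ = 1 ∧ suppFn K v = 0},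
    sSup ((fun x => (max ⟪x, u⟫ 0) ^ p) '' face K v.1)

/-- `h(E_p⁻ K, u)^p = (1/2) Σ_{v ∈ S¹, h(K,v) = 0} max_{x ∈ F(K,v)} ⟨x, u⟩₋^p`. -/
def EmpF {n : ℕ} (p : ℝ) (K : Set (Eucl n)) (u : Eucl n) : ℝ :=
  (1 / 2) * ∑' v : {v : Eucl n // ‖v‖ = 1 ∧ suppFn K v = 0},
    sSup ((fun x => (max (-⟪x, u⟫) 0) ^ p) '' face K v.1)

/-- `(F_p⁺ K)(u) = (1/2) Σ_{v ∈ S¹, h(K,v) = 0} min_{x ∈ F(K,v)} ⟨x, u⟩₊^p`. -/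
def FppF {n : ℕ} (p : ℝ) (K : Set (Eucl n)) (u : Eucl n) : ℝ :=
  (1 / 2) * ∑' v : {v : Eucl n // ‖v‖ = 1 ∧ suppFn K v = 0},
    sInf ((fun x => (max ⟪x, u⟫ 0) ^ p) '' face K v.1)

/-- `(F_p⁻ K)(u) = (1/2) Σ_{v ∈ S¹, h(K,v) = 0} min_{x ∈ F(K,v)} ⟨x, u⟩₋^p`. -/
def FmpF {n : ℕ} (p : ℝ) (K : Set (Eucl n)) (u : Eucl n) : ℝ :=
  (1 / 2) * ∑' v : {v : Eucl n // ‖v‖ = 1 ∧ suppFn K v = 0},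
    sInf ((fun x => (max (-⟪x, u⟫) 0) ^ p) '' face K v.1)

/-- The maximum norm over the unit sphere. -/
def sphSup {n : ℕ} (f : Eucl n → ℝ) : ℝ :=
  ⨆ u : Metric.sphere (0 : Eucl n) 1, |f u.1|

/-- The standard simplex `Tⁿ = conv{o, e₁, …, e_n}`. -/
def stdT (n : ℕ) : Set (Eucl n) :=
  convexHull ℝ (insert (0 : Eucl n) (Set.range fun i : Fin n => EuclideanSpace.single i (1 : ℝ)))

/-- The simplex `T̃ⁿ⁻¹ = conv{e₁, …, e_n}`. -/
def tilT (n : ℕ) : Set (Eucl n) :=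
  convexHull ℝ (Set.range fun i : Fin n => EuclideanSpace.single i (1 : ℝ))

def shear {n : ℕ} (a b : Eucl n) : Eucl n →ₗ[ℝ] Eucl n :=
  LinearMap.id + ((innerSL ℝ a).toLinearMap.smulRight b)

lemma shear_apply {n : ℕ} (a b y : Eucl n) : shear a b y = y + ⟪y, a⟫ • b := by
  simp [shear, real_inner_comm, PiLp.inner_apply, RCLike.inner_apply, mul_comm]

lemma shear_det {n : ℕ} (a b : Eucl n) (hab : ⟪a, b⟫ = 0) :
    LinearMap.det (shear a b) = 1 := by
  classical
  set bas := (EuclideanSpace.basisFun (Fin n) ℝ).toBasis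
  rw [← LinearMap.det_toMatrix bas]
  have h1 : LinearMap.toMatrix bas bas (shear a b) =
      1 + Matrix.replicateCol (Fin 1) (fun i => b i) * Matrix.replicateRow (Fin 1) (fun j => a j) := by
    ext i j
    simp [LinearMap.toMatrix_apply, shear_apply, bas, Matrix.one_apply,
      OrthonormalBasis.coe_toBasis_repr_apply, EuclideanSpace.basisFun_repr,
      OrthonormalBasis.coe_toBasis, EuclideanSpace.basisFun_apply, Matrix.mul_apply,
      EuclideanSpace.single_apply, mul_ite, ite_mul, mul_zero, zero_mul, mul_one,
      Finset.sum_ite_eq, Finset.sum_ite_eq', mul_comm, EuclideanSpace.inner_single_left]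
  rw [h1]; convert Matrix.det_one_add_replicateCol_mul_replicateRow (ι := Fin 1) (fun i => b i) (fun j => a j) using 1
  · congr
  have h2 : dotProduct (fun j => a j) (fun i => b i) = ⟪a, b⟫ := by
    simp [dotProduct, PiLp.inner_apply, RCLike.inner_apply, mul_comm]
  rw [h2, hab, add_zero]

lemma shear_adjoint {n : ℕ} (a b : Eucl n) :
    LinearMap.adjoint (shear a b) = shear b a := by
  refine LinearMap.ext fun x => ?_
  apply ext_inner_left ℝ
  intro y
  rw [LinearMap.adjoint_inner_right]
  rw [shear_apply, shear_apply, inner_add_left, inner_add_right, real_inner_smul_left,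
    real_inner_smul_right, real_inner_comm b x]
  ring

/-- For `n ≥ 2`, an `SL(n)`-covariant map `Φ : 𝒫ⁿ → C_p(ℝⁿ)` satisfies
`Φ(P)(x) = Φ(P)(π_P x)`, where `π_P` is the orthogonal projection onto the linear hull of
`P`. -/
theorem statement_16 (n : ℕ) (hn : 2 ≤ n) (p : ℝ) (hp : 1 < p)
    (Φ : Set (Eucl n) → Eucl n → ℝ)
    (hCp : ∀ P : Set (Eucl n), IsPolytope P → Continuous (Φ P) ∧
      ∀ s : ℝ, 0 < s → ∀ u : Eucl n, Φ P (s • u) = s ^ p * Φ P u)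
    (hcov : ∀ P : Set (Eucl n), IsPolytope P →
      ∀ φ : Eucl n →ₗ[ℝ] Eucl n, LinearMap.det φ = 1 →
        Φ (φ '' P) = Φ P ∘ LinearMap.adjoint φ) :
    ∀ P : Set (Eucl n), IsPolytope P → ∀ x : Eucl n,
      Φ P x = Φ P (Submodule.orthogonalProjectionOnto (Submodule.span ℝ P) x : Eucl n) := by
  intro P hP
  -- the shear-invariance key lemma
  have key : ∀ a b : Eucl n, (∀ u ∈ P, ⟪u, a⟫ = 0) → ⟪a, b⟫ = 0 →
      ∀ z : Eucl n, Φ P (z + ⟪z, b⟫ • a) = Φ P z := by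
    intro a b ha hab z
    have himg : shear a b '' P = P := by
      have : ∀ u ∈ P, shear a b u = u := by
        intro u hu
        rw [shear_apply, ha u hu, zero_smul, add_zero]
      calc shear a b '' P = id '' P := Set.image_congr this
        _ = P := Set.image_id P
    have hc := hcov P hP (shear a b) (shear_det a b hab)
    rw [himg, shear_adjoint] at hc
    have := congrFun hc z
    simp only [Function.comp_apply] at this
    rw [this, shear_apply]
  have h2p : (1 : ℝ) < 2 ^ p :=
    (Real.one_lt_rpow_iff_of_pos (by norm_num)).2 (Or.inl ⟨by norm_num, by linarith⟩)
  have hzero : Φ P 0 = 0 := by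
    have h := (hCp P hP).2 2 (by norm_num) 0
    rw [smul_zero] at h
    nlinarith
  set V := Submodule.span ℝ P with hV
  -- key fact A
  have A : ∀ z : Eucl n, (Submodule.orthogonalProjectionOnto V z : Eucl n) ≠ 0 →
      Φ P z = Φ P (Submodule.orthogonalProjectionOnto V z : Eucl n) := by
    intro z hz
    set y : Eucl n := (Submodule.orthogonalProjectionOnto V z : Eucl n) with hy
    have hyV : y ∈ V := (Submodule.orthogonalProjectionOnto V z).2
    have hw : z - y ∈ Vᗮ := V.sub_starProjection_mem_orthogonal z
    have hny : ‖y‖ ≠ 0 := norm_ne_zero_iff.2 hz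
    have hkey := key (z - y) (-(‖y‖ ^ 2)⁻¹ • y)
      (fun u hu => (Submodule.mem_orthogonal V (z - y)).1 hw u (Submodule.subset_span hu))
      (by rw [real_inner_smul_right, (Submodule.mem_orthogonal' V (z - y)).1 hw y hyV, mul_zero]) z
    have hib : ⟪z, -(‖y‖ ^ 2)⁻¹ • y⟫ = -1 := by
      have h1 : ⟪z - y, y⟫ = 0 := (Submodule.mem_orthogonal' V (z - y)).1 hw y hyV
      have h2 : ⟪z, y⟫ = ‖y‖ ^ 2 := by
        have := inner_sub_left (𝕜 := ℝ) z y y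
        rw [h1, real_inner_self_eq_norm_sq] at this
        linarith
      rw [real_inner_smul_right, h2]
      field_simp
    rw [hib] at hkey
    rw [← hkey]
    congr 1
    rw [neg_one_smul]
    abel
  intro x
  by_cases hy : (Submodule.orthogonalProjectionOnto V x : Eucl n) = 0
  · rw [hy]
    have hxV : x ∈ Vᗮ := by
      have this : x - (Submodule.orthogonalProjectionOnto V x : Eucl n) ∈ Vᗮ := V.sub_starProjection_mem_orthogonal x
      rwa [hy, sub_zero] at this
    by_cases hx0 : x = 0
    · rw [hx0]
    by_cases hVbot : ∃ v : Eucl n, v ∈ V ∧ v ≠ 0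
    · -- limit argument
      obtain ⟨v, hvV, hv0⟩ := hVbot
      have hnv : ‖v‖ ≠ 0 := norm_ne_zero_iff.2 hv0
      have heq : ∀ ε : ℝ, 0 < ε → Φ P (ε • v + x) = Φ P (ε • v) := by
        intro ε hε
        have hkey := key x (-(ε⁻¹ * (‖v‖ ^ 2)⁻¹) • v)
          (fun u hu => (Submodule.mem_orthogonal V x).1 hxV u (Submodule.subset_span hu))
          (by rw [real_inner_smul_right, (Submodule.mem_orthogonal' V x).1 hxV v hvV, mul_zero])
          (ε • v + x)
        have hib : ⟪ε • v + x, -(ε⁻¹ * (‖v‖ ^ 2)⁻¹) • v⟫ = -1 := by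
          rw [real_inner_smul_right, inner_add_left, real_inner_smul_left,
            (Submodule.mem_orthogonal' V x).1 hxV v hvV, real_inner_self_eq_norm_sq]
          field_simp
          ring
        rw [hib, neg_one_smul] at hkey
        rw [← hkey]
        congr 1
        abel
      have T1 : Filter.Tendsto (fun ε : ℝ => Φ P (ε • v + x)) (nhdsWithin 0 (Set.Ioi 0))
          (nhds (Φ P x)) := by
        have hc : Filter.Tendsto (fun ε : ℝ => ε • v + x) (nhds 0) (nhds x) := by
          have := ((continuous_id.smul (continuous_const (y := v))).add
            (continuous_const (y := x))).tendsto (0 : ℝ)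
          convert this using 2 <;> simp
        exact ((hCp P hP).1.tendsto x).comp (hc.mono_left nhdsWithin_le_nhds)
      have T2 : Filter.Tendsto (fun ε : ℝ => Φ P (ε • v + x)) (nhdsWithin 0 (Set.Ioi 0))
          (nhds 0) := by
        have hev : ∀ ε ∈ Set.Ioi (0:ℝ), Φ P (ε • v + x) = ε ^ p * Φ P v := by
          intro ε hε
          rw [heq ε hε, (hCp P hP).2 ε hε v]
        have hrw : Filter.Tendsto (fun ε : ℝ => ε ^ p * Φ P v) (nhdsWithin 0 (Set.Ioi 0))
            (nhds 0) := by
          have h1 : Filter.Tendsto (fun ε : ℝ => ε ^ p) (nhdsWithin 0 (Set.Ioi 0)) (nhds 0) := by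
            have := (Real.continuousAt_rpow_const 0 p (Or.inr (by linarith))).tendsto
            rw [Real.zero_rpow (by linarith)] at this
            exact this.mono_left nhdsWithin_le_nhds
          simpa using h1.mul_const (Φ P v)
        exact Filter.Tendsto.congr' (Filter.eventuallyEq_of_mem self_mem_nhdsWithin
          (fun ε hε => (hev ε hε).symm)) hrw
      rw [tendsto_nhds_unique T1 T2, hzero]
    · -- V is trivial: use a chain of shears to show Φ P x = 0
      push_neg at hVbot
      have hP0 : ∀ u ∈ P, u = (0 : Eucl n) := fun u hu => hVbot u (Submodule.subset_span hu)
      have hkey0 : ∀ a b : Eucl n, ⟪a, b⟫ = 0 →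
          ∀ z : Eucl n, Φ P (z + ⟪z, b⟫ • a) = Φ P z := by
        intro a b hab
        exact key a b (fun u hu => by rw [hP0 u hu, inner_zero_left]) hab
      -- find a ≠ 0 with ⟪x, a⟫ = 0
      obtain ⟨a, haW, ha0⟩ : ∃ a : Eucl n, a ∈ (ℝ ∙ x)ᗮ ∧ a ≠ 0 := by
        have hne : (ℝ ∙ x)ᗮ ≠ ⊥ := by
          intro hbot
          have h1 : Module.finrank ℝ (ℝ ∙ x) + Module.finrank ℝ (ℝ ∙ x)ᗮ =
              Module.finrank ℝ (Eucl n) := Submodule.finrank_add_finrank_orthogonal _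
          rw [hbot, finrank_bot, finrank_span_singleton hx0] at h1
          simp [finrank_euclideanSpace] at h1
          omega
        exact Submodule.exists_mem_ne_zero_of_ne_bot hne
      have hxa : ⟪x, a⟫ = 0 :=
        (Submodule.mem_orthogonal _ a).1 haW x (Submodule.mem_span_singleton_self x)
      have hax : ⟪a, x⟫ = 0 := by rw [real_inner_comm]; exact hxa
      have hnx : ‖x‖ ≠ 0 := norm_ne_zero_iff.2 hx0
      have hna : ‖a‖ ≠ 0 := norm_ne_zero_iff.2 ha0
      -- step 1 : Φ P (x + a) = Φ P x
      have s1 : Φ P (x + a) = Φ P x := by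
        have h := hkey0 a ((‖x‖ ^ 2)⁻¹ • x)
          (by rw [real_inner_smul_right, hax, mul_zero]) x
        have hib : ⟪x, (‖x‖ ^ 2)⁻¹ • x⟫ = 1 := by
          rw [real_inner_smul_right, real_inner_self_eq_norm_sq]; field_simp
        rwa [hib, one_smul] at h
      -- step 2 : Φ P (x + a + x) = Φ P (x + a)
      have s2 : Φ P (x + a + x) = Φ P (x + a) := by
        have h := hkey0 x ((‖a‖ ^ 2)⁻¹ • a)
          (by rw [real_inner_smul_right, hxa, mul_zero]) (x + a)
        have hib : ⟪x + a, (‖a‖ ^ 2)⁻¹ • a⟫ = 1 := by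
          rw [real_inner_smul_right, inner_add_left, hxa, real_inner_self_eq_norm_sq]
          field_simp
          ring
        rwa [hib, one_smul] at h
      -- step 3 : Φ P ((2:ℝ) • x) = Φ P (x + a + x)
      have s3 : Φ P ((2:ℝ) • x) = Φ P (x + a + x) := by
        have h := hkey0 a (-((2:ℝ) * ‖x‖ ^ 2)⁻¹ • x)
          (by rw [real_inner_smul_right, hax, mul_zero]) (x + a + x)
        have hib : ⟪x + a + x, -((2:ℝ) * ‖x‖ ^ 2)⁻¹ • x⟫ = -1 := by
          rw [real_inner_smul_right, inner_add_left, inner_add_left, hax,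
            real_inner_self_eq_norm_sq]
          have : ‖x‖ ^ 2 ≠ 0 := pow_ne_zero 2 hnx
          field_simp
          ring
        rw [hib, neg_one_smul] at h
        rw [← h]
        congr 1
        have : x + a + x + -a = (2:ℝ) • x := by
          rw [two_smul]; abel
        rw [this]
      have hscale : Φ P ((2:ℝ) • x) = 2 ^ p * Φ P x := (hCp P hP).2 2 (by norm_num) x
      have : Φ P x = 2 ^ p * Φ P x := by rw [← hscale, s3, s2, s1]
      have hx : Φ P x = 0 := by nlinarith
      rw [hx, hzero]
  · exact A x hy
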